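/- Let Q : X → X be a positive definite linear operator (⟨Qu, u⟩ > 0 for all u ≠ 0), let x ∈ X, and let V ∈ ∂_C P_K(x) be any Clarke generalized Jacobian of the metric projection P_K at x. Then the operator (Q − I)V + I is invertible. -/
import Mathlib


open RealInnerProductSpace Filter Topology

variable {X : Type*} [NormedAddCommGroup X] [InnerProductSpace ℝ X] [FiniteDimensional ℝ X]

/-- The Clarke generalized Jacobian of a map `F : X → X` at `x`: the convex hull of all
limits of Fréchet derivatives of `F` along sequences of differentiability points
converging to `x`. -/
def clarkeJacobian (F : X → X) (x : X) : Set (X →L[ℝ] X) :=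
  convexHull ℝ {V : X →L[ℝ] X | ∃ u : ℕ → X,
    (∀ k, DifferentiableAt ℝ F (u k)) ∧
    Tendsto u atTop (𝓝 x) ∧
    Tendsto (fun k => fderiv ℝ F (u k)) atTop (𝓝 V)}

/-- `P` is the metric projection onto `K`: `P z` belongs to `K` and is a nearest point
of `K` to `z`. -/
def IsMetricProjection (K : Set X) (P : X → X) : Prop :=
  ∀ z : X, P z ∈ K ∧ ∀ y ∈ K, ‖z - P z‖ ≤ ‖z - y‖

/-- Variational inequality for a metric projection onto a convex set. -/
lemma metricProjection_inner_le_zero {K : Set X} (hconv : Convex ℝ K) {P : X → X}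
    (hP : IsMetricProjection K P) (z w : X) (hw : w ∈ K) :
    ⟪z - P z, w - P z⟫ ≤ 0 := by
  have key : ∀ t : ℝ, t ∈ Set.Ioc (0:ℝ) 1 →
      ⟪z - P z, w - P z⟫ ≤ t / 2 * ‖w - P z‖ ^ 2 := by
    intro t ht
    have hy : (1 - t) • P z + t • w ∈ K :=
      hconv (hP z).1 hw (by linarith [ht.2]) ht.1.le (by ring)
    have h1 := (hP z).2 _ hy
    have h2 : z - ((1 - t) • P z + t • w) = (z - P z) - t • (w - P z) := by
      rw [smul_sub]; module
    rw [h2] at h1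
    have h3 : ‖z - P z‖ ^ 2 ≤ ‖(z - P z) - t • (w - P z)‖ ^ 2 :=
      pow_le_pow_left₀ (norm_nonneg _) h1 2
    have h4 : ‖(z - P z) - t • (w - P z)‖ ^ 2
        = ‖z - P z‖ ^ 2 - 2 * (t * ⟪z - P z, w - P z⟫) + t ^ 2 * ‖w - P z‖ ^ 2 := by
      rw [norm_sub_sq_real, real_inner_smul_right, norm_smul, Real.norm_eq_abs,
        abs_of_pos ht.1, mul_pow]
    nlinarith [ht.1, h3]
  have hT : Tendsto (fun t : ℝ => t / 2 * ‖w - P z‖ ^ 2) (𝓝[>] (0:ℝ)) (𝓝 0) := by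
    have : Tendsto (fun t : ℝ => t / 2 * ‖w - P z‖ ^ 2) (𝓝 (0:ℝ))
        (𝓝 ((0:ℝ) / 2 * ‖w - P z‖ ^ 2)) := by
      exact (tendsto_id.div_const 2).mul_const _
    simpa using this.mono_left nhdsWithin_le_nhds
  refine ge_of_tendsto hT ?_
  filter_upwards [Ioc_mem_nhdsGT_of_mem (Set.mem_Ico.mpr ⟨le_refl 0, one_pos⟩)] with t ht
  exact key t ht

/-- Firm nonexpansiveness of a metric projection onto a convex set. -/
lemma metricProjection_firm {K : Set X} (hconv : Convex ℝ K) {P : X → X}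
    (hP : IsMetricProjection K P) (a b : X) :
    ‖P a - P b‖ ^ 2 ≤ ⟪a - b, P a - P b⟫ := by
  have h1 := metricProjection_inner_le_zero hconv hP a (P b) (hP b).1
  have h2 := metricProjection_inner_le_zero hconv hP b (P a) (hP a).1
  have hsplit : a - b = (a - P a) - (b - P b) + (P a - P b) := by abel
  have e1 : ⟪a - b, P a - P b⟫
      = ⟪a - P a, P a - P b⟫ - ⟪b - P b, P a - P b⟫ + ⟪P a - P b, P a - P b⟫ := by
    rw [hsplit, inner_add_left, inner_sub_left]
  have e2 : ⟪a - P a, P a - P b⟫ = -⟪a - P a, P b - P a⟫ := by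
    rw [show P a - P b = -(P b - P a) by abel, inner_neg_right]
  have e3 : ⟪P a - P b, P a - P b⟫ = ‖P a - P b‖ ^ 2 := real_inner_self_eq_norm_sq _
  linarith [e1, e2.symm ▸ e1]

/-- The firm-nonexpansiveness inequality for the Fréchet derivative of a metric
projection at any differentiability point. -/
lemma fderiv_metricProjection_firm {K : Set X} (hconv : Convex ℝ K) {P : X → X}
    (hP : IsMetricProjection K P) {u₀ : X} (hd : DifferentiableAt ℝ P u₀) (h : X) :
    ‖(fderiv ℝ P u₀) h‖ ^ 2 ≤ ⟪h, (fderiv ℝ P u₀) h⟫ := by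
  set D := fderiv ℝ P u₀ with hD
  have hc : Tendsto (fun n : ℕ => ‖((n : ℝ))‖) atTop atTop := by
    simpa [Real.norm_natCast] using tendsto_natCast_atTop_atTop (R := ℝ)
  have hlim := hd.hasFDerivAt.lim h hc
  set g : ℕ → X := fun n => (n : ℝ) • (P (u₀ + ((n : ℝ))⁻¹ • h) - P u₀) with hg
  have hev : ∀ᶠ n : ℕ in atTop, ‖g n‖ ^ 2 ≤ ⟪h, g n⟫ := by
    filter_upwards [eventually_ge_atTop 1] with n hn
    have ht : (1 : ℝ) ≤ (n : ℝ) := by exact_mod_cast hn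
    have htpos : (0 : ℝ) < (n : ℝ) := lt_of_lt_of_le one_pos ht
    set q := P (u₀ + ((n : ℝ))⁻¹ • h) - P u₀ with hq
    have hfirm := metricProjection_firm hconv hP (u₀ + ((n : ℝ))⁻¹ • h) u₀
    have hsub : u₀ + ((n : ℝ))⁻¹ • h - u₀ = ((n : ℝ))⁻¹ • h := by abel
    rw [hsub, real_inner_smul_left] at hfirm
    have hns : ‖g n‖ ^ 2 = (n : ℝ) ^ 2 * ‖q‖ ^ 2 := by
      rw [hg, norm_smul, Real.norm_natCast, mul_pow]
    have hip : ⟪h, g n⟫ = (n : ℝ) * ⟪h, q⟫ := by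
      rw [hg, real_inner_smul_right]
    have hmu : ((n : ℝ)) * ((n : ℝ))⁻¹ = 1 := mul_inv_cancel₀ (ne_of_gt htpos)
    rw [hns, hip]
    nlinarith [hfirm, htpos, sq_nonneg ((n:ℝ))]
  have h1 : Tendsto (fun n => ‖g n‖ ^ 2) atTop (𝓝 (‖D h‖ ^ 2)) := (hlim.norm).pow 2
  have h2 : Tendsto (fun n => ⟪h, g n⟫) atTop (𝓝 ⟪h, D h⟫) :=
    tendsto_const_nhds.inner hlim
  exact le_of_tendsto_of_tendsto h1 h2 hev

/-- The set of firmly nonexpansive continuous linear operators is convex. -/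
lemma convex_firm_set :
    Convex ℝ {W : X →L[ℝ] X | ∀ h : X, ‖W h‖ ^ 2 ≤ ⟪h, W h⟫} := by
  have equiv : ∀ (W : X →L[ℝ] X) (h : X),
      ‖W h‖ ^ 2 ≤ ⟪h, W h⟫ ↔ ‖(2:ℝ) • W h - h‖ ≤ ‖h‖ := by
    intro W h
    have expand : ‖(2:ℝ) • W h - h‖ ^ 2
        = 4 * ‖W h‖ ^ 2 - 4 * ⟪h, W h⟫ + ‖h‖ ^ 2 := by
      rw [norm_sub_sq_real, real_inner_smul_left, norm_smul, real_inner_comm]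
      norm_num; ring
    constructor
    · intro hle
      have : ‖(2:ℝ) • W h - h‖ ^ 2 ≤ ‖h‖ ^ 2 := by rw [expand]; linarith
      exact (pow_le_pow_iff_left₀ (norm_nonneg _) (norm_nonneg _) two_ne_zero).mp this
    · intro hle
      have : ‖(2:ℝ) • W h - h‖ ^ 2 ≤ ‖h‖ ^ 2 := pow_le_pow_left₀ (norm_nonneg _) hle 2
      rw [expand] at this; linarith
  intro W1 hW1 W2 hW2 aa bb ha hb hab
  intro h
  rw [equiv]
  have hpt : ((aa • W1 + bb • W2) h) = aa • W1 h + bb • W2 h := by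
    simp [ContinuousLinearMap.add_apply, ContinuousLinearMap.smul_apply]
  have hcomb : (2:ℝ) • (aa • W1 + bb • W2) h - h
      = aa • ((2:ℝ) • W1 h - h) + bb • ((2:ℝ) • W2 h - h) := by
    rw [hpt]
    match_scalars <;> linarith
  calc ‖(2:ℝ) • (aa • W1 + bb • W2) h - h‖
      = ‖aa • ((2:ℝ) • W1 h - h) + bb • ((2:ℝ) • W2 h - h)‖ := by rw [hcomb]
    _ ≤ aa * ‖(2:ℝ) • W1 h - h‖ + bb * ‖(2:ℝ) • W2 h - h‖ := by
        refine (norm_add_le _ _).trans ?_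
        rw [norm_smul, norm_smul, Real.norm_eq_abs, Real.norm_eq_abs,
          abs_of_nonneg ha, abs_of_nonneg hb]
    _ ≤ aa * ‖h‖ + bb * ‖h‖ := by
        gcongr
        · exact (equiv W1 h).mp (hW1 h)
        · exact (equiv W2 h).mp (hW2 h)
    _ = ‖h‖ := by rw [← add_mul, hab, one_mul]

/-- If `Q` is a positive definite linear operator and `V` is any Clarke generalized Jacobian
of the metric projection at `x`, then the operator `(Q − I) V + I` is invertible. -/
theorem newtonOperator_invertible_of_posDef
    (K : Set X) (hne : K.Nonempty) (hcl : IsClosed K) (hconv : Convex ℝ K)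
    (hcone : ∀ c : ℝ, 0 ≤ c → ∀ y ∈ K, c • y ∈ K)
    (P : X → X) (hP : IsMetricProjection K P)
    (Q : X →L[ℝ] X) (hpd : ∀ u : X, u ≠ 0 → 0 < ⟪Q u, u⟫)
    (x : X) (V : X →L[ℝ] X) (hV : V ∈ clarkeJacobian P x) :
    IsUnit ((Q - 1) * V + 1) := by
  -- V satisfies the firm-nonexpansiveness inequality
  have hVfirm : ∀ h : X, ‖V h‖ ^ 2 ≤ ⟪h, V h⟫ := by
    have hsub : {W : X →L[ℝ] X | ∃ u : ℕ → X,
        (∀ k, DifferentiableAt ℝ P (u k)) ∧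
        Tendsto u atTop (𝓝 x) ∧
        Tendsto (fun k => fderiv ℝ P (u k)) atTop (𝓝 W)}
        ⊆ {W : X →L[ℝ] X | ∀ h : X, ‖W h‖ ^ 2 ≤ ⟪h, W h⟫} := by
      rintro W ⟨u, hdiff, -, hfd⟩ h
      have heval : Tendsto (fun k => (fderiv ℝ P (u k)) h) atTop (𝓝 (W h)) :=
        ((ContinuousLinearMap.apply ℝ X h).continuous.tendsto W).comp hfd
      have h1 : Tendsto (fun k => ‖(fderiv ℝ P (u k)) h‖ ^ 2) atTop (𝓝 (‖W h‖ ^ 2)) :=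
        (heval.norm).pow 2
      have h2 : Tendsto (fun k => ⟪h, (fderiv ℝ P (u k)) h⟫) atTop (𝓝 ⟪h, W h⟫) :=
        tendsto_const_nhds.inner heval
      refine le_of_tendsto_of_tendsto h1 h2 ?_
      exact Eventually.of_forall fun k =>
        fderiv_metricProjection_firm hconv hP (hdiff k) h
    exact convexHull_min hsub convex_firm_set hV
  set T : X →L[ℝ] X := (Q - 1) * V + 1 with hT
  -- T is injective
  have hker : ∀ h : X, T h = 0 → h = 0 := by
    intro h hh
    have happ : Q (V h) - V h + h = 0 := by
      simpa [hT, ContinuousLinearMap.add_apply, ContinuousLinearMap.mul_apply,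
        ContinuousLinearMap.sub_apply, ContinuousLinearMap.one_apply] using hh
    have hhe : h = V h - Q (V h) := by
      linear_combination (norm := module) happ
    set v := V h with hv
    have hfirm := hVfirm h
    have hip : ⟪h, v⟫ = ⟪v, v⟫ - ⟪Q v, v⟫ := by
      rw [hhe]; rw [inner_sub_left]
    have hv0 : v = 0 := by
      by_contra hne0
      have hq := hpd v hne0
      have : ⟪v, v⟫ = ‖v‖ ^ 2 := real_inner_self_eq_norm_sq v
      rw [← hv] at hfirm
      linarith [hip ▸ hfirm]
    rw [hv0] at hhe
    simpa using hhe
  have hinj : Function.Injective T := by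
    intro a b hab
    have : T (a - b) = 0 := by rw [map_sub, hab, sub_self]
    have := hker _ this
    exact sub_eq_zero.mp this
  have hinjL : Function.Injective (T : X →ₗ[ℝ] X) := hinj
  have hsurjL : Function.Surjective (T : X →ₗ[ℝ] X) :=
    LinearMap.surjective_of_injective hinjL
  let e : X ≃ₗ[ℝ] X := LinearEquiv.ofBijective (T : X →ₗ[ℝ] X) ⟨hinjL, hsurjL⟩
  let e' : X ≃L[ℝ] X := e.toContinuousLinearEquiv
  have hu : IsUnit ((e' : X →L[ℝ] X)) := by
    refine ⟨⟨(e' : X →L[ℝ] X), (e'.symm : X →L[ℝ] X), ?_, ?_⟩, rfl⟩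
    · ext z; simp [ContinuousLinearMap.mul_apply]
    · ext z; simp [ContinuousLinearMap.mul_apply]
  have hcoe : (e' : X →L[ℝ] X) = T := by ext z; rfl
  rwa [hcoe] at hu
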